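/- Let B₁,…,B_l be elements of an associative algebra with [B_i,B_j] = c_{ij}·1 for scalars c_{ij}, and suppose H is a quadratic noncommutative expression H = Σ_{i≤j} a_{ij} B_i ⋄ B_j + Σ_j b_j B_j + c·1 with scalar coefficients. If F = Sym_m(B_{j₁},…,B_{j_m}) is any symmetrized monomial, then [H, F] is again a linear combination of symmetrized monomials of degree m in the B's, with coefficients obtained by the Leibniz rule from the classical Poisson bracket: explicitly [H,F] equals the symmetrization (at B) of {h, f}, where h = Σ a_{ij} y_i y_j + Σ b_j y_j + c, f = y_{j₁}⋯y_{j_m} are polynomials in commuting variables y and {g₁,g₂} := Σ_{i,j} c_{ij} ∂g₁/∂y_i ∂g₂/∂y_j. -/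

import Mathlib

/-- Commutator in an associative ring. -/
def brk {A : Type*} [Ring A] (a b : A) : A := a * b - b * a

/-- Symmetrized product of two elements. -/
def dia {A : Type*} [Ring A] [Algebra ℚ A] (a b : A) : A := (2⁻¹ : ℚ) • (a * b + b * a)

/-- Fully symmetrized product of a list of elements: the average of the products
over all orderings of the list. -/
def symP {A : Type*} [Ring A] [Algebra ℚ A] (L : List A) : A :=
  ((L.length.factorial : ℚ)⁻¹) • ((L.permutations.map List.prod).sum)

namespace P35

/-- All ways to pick one element out of a list, keeping the rest in order. -/
def pick {α : Type*} : List α → List (α × List α)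
  | [] => []
  | a :: t => (a, t) :: (pick t).map (fun p => (p.1, a :: p.2))

lemma pick_mem {α : Type*} {M : List α} {p : α × List α} (hp : p ∈ pick M) :
    p.1 ∈ M ∧ ∀ b ∈ p.2, b ∈ M := by
  induction M generalizing p with
  | nil => simp [pick] at hp
  | cons a t ih =>
    simp only [pick, List.mem_cons, List.mem_map] at hp
    rcases hp with rfl | ⟨q, hq, rfl⟩
    · exact ⟨by simp, fun b hb => by simp [hb]⟩
    · obtain ⟨h1, h2⟩ := ih hq
      refine ⟨by simp [h1], ?_⟩
      intro b hb
      rcases List.mem_cons.mp hb with rfl | hb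
      · simp
      · simp [h2 b hb]

lemma pick_length {α : Type*} {M : List α} {p : α × List α} (hp : p ∈ pick M) :
    p.2.length + 1 = M.length := by
  induction M generalizing p with
  | nil => simp [pick] at hp
  | cons a t ih =>
    simp only [pick, List.mem_cons, List.mem_map] at hp
    rcases hp with rfl | ⟨q, hq, rfl⟩
    · simp
    · have := ih hq
      simp only [List.length_cons] at this ⊢
      omega

section Sums
variable {γ : Type*} {Mo : Type*} [AddCommMonoid Mo]

lemma sum_map_flatMap (l : List γ) {β : Type*} (g : γ → List β) (f : β → Mo) :
    ((l.flatMap g).map f).sum = (l.map fun a => ((g a).map f).sum).sum := by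
  induction l with
  | nil => rfl
  | cons a t ih => simp [List.flatMap_cons, ih]

lemma sum_map_add (l : List γ) (f g : γ → Mo) :
    (l.map fun a => f a + g a).sum = (l.map f).sum + (l.map g).sum := by
  induction l with
  | nil => simp
  | cons a t ih => simp [ih]; abel

lemma sum_map_sub {Go : Type*} [AddCommGroup Go] (l : List γ) (f g : γ → Go) :
    (l.map fun a => f a - g a).sum = (l.map f).sum - (l.map g).sum := by
  induction l with
  | nil => simp
  | cons a t ih => simp [ih]; abel

lemma sum_map_smul (q : ℚ) {Go : Type*} [AddCommGroup Go] [Module ℚ Go] (l : List γ) (f : γ → Go) :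
    (l.map fun a => q • f a).sum = q • (l.map f).sum := by
  induction l with
  | nil => simp
  | cons a t ih => simp [ih, smul_add]

end Sums

section Group
variable {α : Type*} {Mo : Type*} [AddCommMonoid Mo]

lemma aux_split (y a : α) (t : List α) (f : List α → Mo) :
    ((List.permutations'Aux y (a :: t)).map f).sum
      = f (y :: a :: t) + ((List.permutations'Aux y t).map (fun s => f (a :: s))).sum := by
  simp [List.permutations'Aux, List.map_map, Function.comp_def]

/-- Grouping the permutations of `M` by their first element. -/
lemma sum_perms'_group :
    ∀ (M : List α), M ≠ [] → ∀ (f : List α → Mo),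
    (M.permutations'.map f).sum
      = ((pick M).map fun p => ((p.2.permutations'.map fun t => f (p.1 :: t)).sum)).sum := by
  intro M
  induction M with
  | nil => intro h; exact absurd rfl h
  | cons y M' ih =>
    intro _ f
    by_cases hM' : M' = []
    · subst hM'; simp [pick, List.permutations']
    · have e1 : ((y :: M').permutations'.map f).sum
          = (M'.permutations'.map fun τ => ((List.permutations'Aux y τ).map f).sum).sum := by
        show (((M'.permutations'.flatMap (List.permutations'Aux y))).map f).sum = _
        exact sum_map_flatMap _ _ _
      set f' : List α → Mo := fun τ =>
        match τ with
        | [] => 0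
        | a :: t => ((List.permutations'Aux y t).map (fun s => f (a :: s))).sum with hf'
      have e2 : (M'.permutations'.map fun τ => ((List.permutations'Aux y τ).map f).sum)
          = (M'.permutations'.map fun τ => f (y :: τ) + f' τ) := by
        apply List.map_congr_left
        intro τ hτ
        have hne : τ ≠ [] := by
          intro h
          subst h
          exact hM' (List.Perm.eq_nil (List.mem_permutations'.mp hτ).symm)
        cases τ with
        | nil => exact absurd rfl hne
        | cons a t => exact aux_split y a t f
      rw [e1, e2, sum_map_add, ih hM' f']
      have e4 : ((pick M').map fun p => ((p.2.permutations'.map fun t => f' (p.1 :: t)).sum)).sum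
          = ((pick M').map fun p =>
              (((y :: p.2).permutations'.map fun t => f (p.1 :: t)).sum)).sum := by
        apply congrArg
        apply List.map_congr_left
        intro p _
        rw [show (y :: p.2).permutations' = p.2.permutations'.flatMap (List.permutations'Aux y) from rfl]
        rw [sum_map_flatMap]
      rw [e4]
      simp only [pick, List.map_cons, List.sum_cons, List.map_map]
      rfl

/-- Swapping the order of two successive picks. -/
lemma pick_pick_swap :
    ∀ (M : List α) (G : α → α → List α → Mo),
    ((pick M).map fun p => ((pick p.2).map fun q => G p.1 q.1 q.2).sum).sum
      = ((pick M).map fun p => ((pick p.2).map fun q => G q.1 p.1 q.2).sum).sum := by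
  intro M
  induction M with
  | nil => intro G; rfl
  | cons y t ih =>
    intro G
    simp only [pick, List.map_cons, List.sum_cons, List.map_map, Function.comp_def]
    rw [sum_map_add, sum_map_add]
    rw [ih (fun a b s => G a b (y :: s))]
    abel
end Group

end P35
section Alg
variable {A : Type*} [Ring A] [Algebra ℚ A]

lemma brk_mul_right (x u v : A) : brk x (u * v) = brk x u * v + u * brk x v := by
  unfold brk; noncomm_ring

lemma brk_smul_right (q : ℚ) (x u : A) : brk x (q • u) = q • brk x u := by
  unfold brk; rw [mul_smul_comm, smul_mul_assoc, smul_sub]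

lemma brk_add_right (x u v : A) : brk x (u + v) = brk x u + brk x v := by
  unfold brk; noncomm_ring

lemma brk_zero_right (x : A) : brk x 0 = 0 := by unfold brk; simp

lemma brk_one_right (x : A) : brk x 1 = 0 := by unfold brk; simp

lemma brk_add_left (x u v : A) : brk (u + v) x = brk u x + brk v x := by
  unfold brk; noncomm_ring

lemma brk_smul_left (q : ℚ) (x u : A) : brk (q • u) x = q • brk u x := by
  unfold brk; rw [mul_smul_comm, smul_mul_assoc, smul_sub]

lemma dia_comm (a b : A) : dia a b = dia b a := by unfold dia; rw [add_comm]

lemma dia_add_right (a u v : A) : dia a (u + v) = dia a u + dia a v := by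
  unfold dia; rw [mul_add, add_mul, ← smul_add]; congr 1; abel

lemma dia_smul_right (q : ℚ) (a u : A) : dia a (q • u) = q • dia a u := by
  unfold dia
  rw [mul_smul_comm, smul_mul_assoc, ← smul_add, smul_comm]

lemma dia_zero_right (a : A) : dia a 0 = 0 := by unfold dia; simp

lemma dia_one_right (a : A) : dia a 1 = a := by
  unfold dia
  rw [mul_one, one_mul]
  rw [show a + a = (2 : ℚ) • a by rw [two_smul]]
  rw [smul_smul]
  norm_num

lemma two_inv_cancel {a : A} : (2⁻¹ : ℚ) • ((2:ℚ) • a) = a := by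
  rw [smul_smul]; norm_num

lemma dia_central_left {z : A} (hz : ∀ w, z * w = w * z) (u : A) : dia z u = z * u := by
  unfold dia
  rw [← hz u, ← two_smul ℚ (z * u), two_inv_cancel]

lemma dia_central_mul {z : A} (hz : ∀ w, z * w = w * z) (y u : A) :
    dia y (z * u) = z * dia y u := by
  unfold dia
  rw [mul_smul_comm, mul_add]
  congr 1
  rw [← mul_assoc, ← hz y, mul_assoc, mul_assoc]

lemma dia_eq (x Z : A) : dia x Z = x * Z - (2⁻¹ : ℚ) • brk x Z := by
  unfold dia brk
  rw [show x * Z + Z * x = (2:ℚ) • (x * Z) - (x * Z - Z * x) by rw [two_smul]; abel]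
  rw [smul_sub, two_inv_cancel]

lemma brk_dia_right (x u v : A) : brk x (dia u v) = dia (brk x u) v + dia u (brk x v) := by
  unfold dia
  rw [brk_smul_right, ← smul_add]
  congr 1
  unfold brk
  noncomm_ring

lemma brk_dia_left (u v z : A) : brk (dia u v) z = dia u (brk v z) + dia v (brk u z) := by
  unfold dia
  rw [brk_smul_left, ← smul_add]
  congr 1
  unfold brk
  noncomm_ring

lemma sum_map_dia {γ : Type*} (y : A) (l : List γ) (g : γ → A) :
    dia y (l.map g).sum = (l.map fun a => dia y (g a)).sum := by
  induction l with
  | nil => simp [dia_zero_right]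
  | cons a t ih => simp [dia_add_right, ih]

lemma sum_map_brk {γ : Type*} (y : A) (l : List γ) (g : γ → A) :
    brk y (l.map g).sum = (l.map fun a => brk y (g a)).sum := by
  induction l with
  | nil => simp [brk_zero_right]
  | cons a t ih => simp [brk_add_right, ih]

end Alg

section SymP
variable {A : Type*} [Ring A] [Algebra ℚ A]

lemma symP_eq' (L : List A) :
    symP L = ((L.length.factorial : ℚ))⁻¹ • ((L.permutations'.map List.prod).sum) := by
  unfold symP
  congr 1
  exact List.Perm.sum_eq (List.Perm.map _ (List.permutations_perm_permutations' L))

lemma symP_nil : symP ([] : List A) = 1 := by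
  rw [symP_eq']; simp [List.permutations']

lemma symP_singleton (x : A) : symP [x] = x := by
  rw [symP_eq']; simp [List.permutations', List.permutations'Aux]

lemma symP_perm {L L' : List A} (h : L.Perm L') : symP L = symP L' := by
  unfold symP
  rw [h.length_eq]
  congr 1
  exact List.Perm.sum_eq (List.Perm.map _ (List.Perm.permutations h))

lemma perms'_sum_eq (L : List A) :
    ((L.permutations'.map List.prod).sum) = (L.length.factorial : ℚ) • symP L := by
  rw [symP_eq', smul_smul]
  rw [mul_inv_cancel₀ (by exact_mod_cast Nat.factorial_ne_zero L.length)]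
  rw [one_smul]

/-- Grouping formula: picking out the first factor. -/
lemma pick_sum_symP (M : List A) :
    ((P35.pick M).map fun p => p.1 * symP p.2).sum = (M.length : ℚ) • symP M := by
  cases M with
  | nil => simp [P35.pick]
  | cons y t =>
    have hM : (y :: t) ≠ [] := List.cons_ne_nil _ _
    have hg := P35.sum_perms'_group (y :: t) hM List.prod
    rw [perms'_sum_eq] at hg
    have e : ((P35.pick (y :: t)).map fun p =>
          ((p.2.permutations'.map fun s => List.prod (p.1 :: s)).sum))
        = ((P35.pick (y :: t)).map fun p => (t.length.factorial : ℚ) • (p.1 * symP p.2)) := by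
      apply List.map_congr_left
      intro p hp
      have hlen : p.2.length = t.length := by
        have := P35.pick_length hp
        simp only [List.length_cons] at this
        omega
      have : (p.2.permutations'.map fun s => List.prod (p.1 :: s))
          = (p.2.permutations'.map fun s => p.1 * List.prod s) := by
        apply List.map_congr_left; intro s _; simp
      rw [this, List.sum_map_mul_left, perms'_sum_eq, hlen, mul_smul_comm]
    rw [e, P35.sum_map_smul] at hg
    have hfne : (t.length.factorial : ℚ) ≠ 0 := by exact_mod_cast t.length.factorial_ne_zero
    have hfac : ((y :: t).length.factorial : ℚ)
        = ((y :: t).length : ℚ) * (t.length.factorial : ℚ) := by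
      simp [List.length_cons, Nat.factorial_succ]
    rw [hfac, mul_smul] at hg
    have h2 : ((P35.pick (y :: t)).map fun p => p.1 * symP p.2).sum
        = ((t.length.factorial : ℚ))⁻¹ • (((y :: t).length : ℚ) • (t.length.factorial : ℚ) • symP (y :: t)) := by
      rw [hg, smul_smul, inv_mul_cancel₀ hfne, one_smul]
    rw [h2, smul_smul, smul_smul, show ((t.length.factorial : ℚ))⁻¹ * ((y :: t).length : ℚ) * (t.length.factorial : ℚ) = ((y :: t).length : ℚ) from by field_simp]

end SymP
section Main
variable {A : Type*} [Ring A] [Algebra ℚ A]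

/-- All pairwise commutators of members of `L` are central. -/
def CenH (L : List A) : Prop := ∀ p ∈ L, ∀ q ∈ L, ∀ w : A, brk p q * w = w * brk p q

lemma cenH_sub {L₁ L₂ : List A} (h : ∀ a ∈ L₁, a ∈ L₂) (hc : CenH L₂) : CenH L₁ :=
  fun p hp q hq w => hc p (h p hp) q (h q hq) w

lemma brk_swap (a b : A) : b * a = a * b - brk a b := by unfold brk; noncomm_ring

lemma pick_cons_sum {Mo : Type*} [AddCommMonoid Mo] (x : A) (L : List A) (g : A × List A → Mo) :
    ((P35.pick (x :: L)).map g).sum = g (x, L) + ((P35.pick L).map (fun p => g (p.1, x :: p.2))).sum := by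
  simp only [P35.pick, List.map_cons, List.sum_cons, List.map_map, Function.comp_def]

theorem mainPQ : ∀ (n : ℕ) (x : A) (L : List A), L.length ≤ n → CenH (x :: L) →
    (symP (x :: L) = dia x (symP L) ∧
     brk x (symP L) = ((P35.pick L).map fun p => brk x p.1 * symP p.2).sum) := by
  intro n
  induction n with
  | zero =>
    intro x L hL _
    have : L = [] := List.length_eq_zero_iff.mp (Nat.le_zero.mp hL)
    subst this
    exact ⟨by rw [symP_nil, dia_one_right, symP_singleton], by rw [symP_nil, brk_one_right]; rfl⟩
  | succ n ih =>
    intro x L hL hcen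
    cases L with
    | nil =>
      exact ⟨by rw [symP_nil, dia_one_right, symP_singleton], by rw [symP_nil, brk_one_right]; rfl⟩
    | cons y M =>
      have hM : M.length ≤ n := by simpa using hL
      have hcenyM : CenH (y :: M) := cenH_sub (fun a ha => List.mem_cons_of_mem _ ha) hcen
      have hcenxM : CenH (x :: M) := by
        apply cenH_sub (L₂ := x :: y :: M) ?_ hcen
        intro a ha
        rcases List.mem_cons.mp ha with rfl | ha
        · simp
        · simp [ha]
      have hPyM : symP (y :: M) = dia y (symP M) := (ih y M hM hcenyM).1
      have hQxM : brk x (symP M) = ((P35.pick M).map fun p => brk x p.1 * symP p.2).sum :=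
        (ih x M hM hcenxM).2
      -- the commutator (Q) statement for (x, y :: M)
      have hQ : brk x (symP (y :: M))
          = ((P35.pick (y :: M)).map fun p => brk x p.1 * symP p.2).sum := by
        rw [hPyM, brk_dia_right]
        have hcxy : ∀ w, brk x y * w = w * brk x y :=
          fun w => hcen x (by simp) y (by simp) w
        rw [dia_central_left hcxy, hQxM, sum_map_dia]
        have e : (P35.pick M).map (fun q => dia y (brk x q.1 * symP q.2))
            = (P35.pick M).map (fun q => brk x q.1 * symP (y :: q.2)) := by
          apply List.map_congr_left
          intro q hq
          obtain ⟨hq1, hq2⟩ := P35.pick_mem hq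
          have hcq : ∀ w, brk x q.1 * w = w * brk x q.1 :=
            fun w => hcen x (by simp) q.1 (by simp [hq1]) w
          rw [dia_central_mul hcq]
          congr 1
          have hlen : q.2.length ≤ n := by
            have := P35.pick_length hq; omega
          have hcen' : CenH (y :: q.2) := by
            apply cenH_sub (L₂ := x :: y :: M) ?_ hcen
            intro a ha
            rcases List.mem_cons.mp ha with rfl | ha
            · simp
            · simp [hq2 a ha]
          exact ((ih y q.2 hlen hcen').1).symm
        rw [e, pick_cons_sum y M (fun p => brk x p.1 * symP p.2)]
      refine ⟨?_, hQ⟩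
      -- now the (P) statement for (x, y :: M)
      have eqA := pick_sum_symP (x :: y :: M)
      rw [pick_cons_sum x (y :: M) (fun p => p.1 * symP p.2)] at eqA
      dsimp only at eqA
      -- rewrite the inner sum
      have eI : (P35.pick (y :: M)).map (fun p => p.1 * symP (x :: p.2))
          = (P35.pick (y :: M)).map (fun p =>
              x * (p.1 * symP p.2) - brk x p.1 * symP p.2
                - (2⁻¹ : ℚ) • (p.1 * brk x (symP p.2))) := by
        apply List.map_congr_left
        intro p hp
        obtain ⟨hp1, hp2⟩ := P35.pick_mem hp
        have hlen : p.2.length ≤ n := by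
          have := P35.pick_length hp
          simp only [List.length_cons] at this hL
          omega
        have hcen' : CenH (x :: p.2) := by
          apply cenH_sub (L₂ := x :: y :: M) ?_ hcen
          intro a ha
          rcases List.mem_cons.mp ha with rfl | ha
          · simp
          · simp [hp2 a ha]
        have h1 : symP (x :: p.2) = x * symP p.2 - (2⁻¹ : ℚ) • brk x (symP p.2) := by
          rw [(ih x p.2 hlen hcen').1, dia_eq]
        rw [h1, mul_sub, mul_smul_comm, ← mul_assoc, brk_swap x p.1, sub_mul, mul_assoc, sub_sub]
      rw [eI] at eqA
      rw [show (P35.pick (y :: M)).map (fun p =>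
              x * (p.1 * symP p.2) - brk x p.1 * symP p.2
                - (2⁻¹ : ℚ) • (p.1 * brk x (symP p.2)))
          = (P35.pick (y :: M)).map (fun p =>
              (x * (p.1 * symP p.2) - brk x p.1 * symP p.2)
                - ((2⁻¹ : ℚ) • (p.1 * brk x (symP p.2)))) from rfl] at eqA
      rw [P35.sum_map_sub, P35.sum_map_sub, P35.sum_map_smul] at eqA
      rw [List.sum_map_mul_left, pick_sum_symP (y :: M), ← hQ] at eqA
      -- the double-pick term
      have hD : ((P35.pick (y :: M)).map fun p => p.1 * brk x (symP p.2)).sum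
          = (M.length : ℚ) • brk x (symP (y :: M)) := by
        have e1 : (P35.pick (y :: M)).map (fun p => p.1 * brk x (symP p.2))
            = (P35.pick (y :: M)).map (fun p =>
                ((P35.pick p.2).map fun q => brk x q.1 * (p.1 * symP q.2)).sum) := by
          apply List.map_congr_left
          intro p hp
          obtain ⟨hp1, hp2⟩ := P35.pick_mem hp
          have hlen : p.2.length ≤ n := by
            have := P35.pick_length hp
            simp only [List.length_cons] at this hL
            omega
          have hcen' : CenH (x :: p.2) := by
            apply cenH_sub (L₂ := x :: y :: M) ?_ hcen
            intro a ha
            rcases List.mem_cons.mp ha with rfl | ha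
            · simp
            · simp [hp2 a ha]
          rw [(ih x p.2 hlen hcen').2, ← List.sum_map_mul_left]
          apply congrArg
          apply List.map_congr_left
          intro q hq
          obtain ⟨hq1, _⟩ := P35.pick_mem hq
          have hcq : ∀ w, brk x q.1 * w = w * brk x q.1 :=
            fun w => hcen x (by simp) q.1 (by simp [hp2 q.1 hq1]) w
          show p.1 * (brk x q.1 * symP q.2) = brk x q.1 * (p.1 * symP q.2)
          rw [← mul_assoc, ← hcq p.1, mul_assoc]
        rw [e1, P35.pick_pick_swap (y :: M) (fun a b s => brk x b * (a * symP s))]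
        have e2 : (P35.pick (y :: M)).map (fun p =>
              ((P35.pick p.2).map fun q => brk x p.1 * (q.1 * symP q.2)).sum)
            = (P35.pick (y :: M)).map (fun p =>
                (M.length : ℚ) • (brk x p.1 * symP p.2)) := by
          apply List.map_congr_left
          intro p hp
          rw [List.sum_map_mul_left, pick_sum_symP]
          have hlen : p.2.length = M.length := by
            have := P35.pick_length hp
            simp only [List.length_cons] at this
            omega
          rw [hlen, mul_smul_comm]
        rw [e2, P35.sum_map_smul, ← hQ]
      rw [hD] at eqA
      -- finish by scalar arithmetic
      rw [mul_smul_comm] at eqA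
      rw [dia_eq]
      have hnz : ((x :: y :: M).length : ℚ) ≠ 0 := by
        simp only [List.length_cons]
        positivity
      apply smul_right_injective A hnz
      show ((x :: y :: M).length : ℚ) • symP (x :: y :: M) = _
      rw [← eqA]
      simp only [List.length_cons]
      push_cast
      match_scalars <;> ring
end Main
open MvPolynomial in
/-- Symmetrization at `B` of a commutative polynomial: each monomial
`y_{i₁}⋯y_{i_k}` is sent to `Sym_k(B_{i₁},…,B_{i_k})`, extended linearly. -/
noncomputable def symmQ {A : Type*} [Ring A] [Algebra ℚ A] {l : ℕ} (B : Fin l → A)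
    (P : MvPolynomial (Fin l) ℚ) : A :=
  (AddMonoidAlgebra.coeff P).sum fun mono coeff =>
    coeff • symP ((List.ofFn fun i => List.replicate (mono i) (B i)).flatten)

open MvPolynomial in
/-- The constant-case Poisson bracket `{g₁,g₂} = Σ_{i,j} c_{ij} ∂g₁/∂y_i ∂g₂/∂y_j`
on commutative polynomials. -/
noncomputable def poisC {l : ℕ} (c : Fin l → Fin l → ℚ)
    (g₁ g₂ : MvPolynomial (Fin l) ℚ) : MvPolynomial (Fin l) ℚ :=
  ∑ i : Fin l, ∑ j : Fin l, C (c i j) * pderiv i g₁ * pderiv j g₂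

section Lift
open MvPolynomial
variable {A : Type*} [Ring A] [Algebra ℚ A] {l : ℕ}

/-- The list of `B`'s encoded by a monomial exponent vector. -/
def mlist (B : Fin l → A) (s : Fin l →₀ ℕ) : List A :=
  (List.ofFn fun i => List.replicate (s i) (B i)).flatten

lemma coe_flatten {α : Type*} : ∀ (L : List (List α)),
    ((L.flatten : List α) : Multiset α) = (L.map (Multiset.ofList)).sum
  | [] => rfl
  | t :: L => by
    rw [show ((((t :: L).flatten : List α)) : Multiset α)
        = (t : Multiset α) + ((L.flatten : List α) : Multiset α) from rfl]
    rw [coe_flatten L]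
    rfl

lemma mlist_multiset (B : Fin l → A) (s : Fin l →₀ ℕ) :
    ((mlist B s : List A) : Multiset A) = ∑ i : Fin l, Multiset.replicate (s i) (B i) := by
  unfold mlist
  rw [coe_flatten, List.map_ofFn, List.sum_ofFn]
  exact Finset.sum_congr rfl (fun i _ => Multiset.coe_replicate _ _)

lemma mlist_zero (B : Fin l → A) : mlist B 0 = [] := by
  have h : ((mlist B 0 : List A) : Multiset A) = (([] : List A) : Multiset A) := by
    rw [mlist_multiset]
    simp
  exact List.Perm.eq_nil (Multiset.coe_eq_coe.mp h)

lemma mlist_perm_cons (B : Fin l → A) (s : Fin l →₀ ℕ) (i : Fin l) :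
    (mlist B (s + Finsupp.single i 1)).Perm (B i :: mlist B s) := by
  rw [← Multiset.coe_eq_coe, ← Multiset.cons_coe, mlist_multiset, mlist_multiset]
  simp only [Finsupp.add_apply, Multiset.replicate_add]
  rw [Finset.sum_add_distrib]
  have e2 : ∀ k : Fin l, Multiset.replicate ((Finsupp.single i 1 : Fin l →₀ ℕ) k) (B k)
      = if i = k then ({B k} : Multiset A) else 0 := by
    intro k
    rw [Finsupp.single_apply]
    split
    · rw [Multiset.replicate_one]
    · rfl
  rw [Finset.sum_congr rfl (fun k _ => e2 k)]
  rw [Finset.sum_ite_eq Finset.univ i (fun k => ({B k} : Multiset A))]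
  rw [if_pos (Finset.mem_univ i), add_comm, Multiset.singleton_add]

lemma mem_mlist {B : Fin l → A} {s : Fin l →₀ ℕ} {a : A} (ha : a ∈ mlist B s) :
    ∃ k, a = B k := by
  unfold mlist at ha
  rw [List.mem_flatten] at ha
  obtain ⟨t, ht, hat⟩ := ha
  rw [List.mem_ofFn] at ht
  obtain ⟨i, rfl⟩ := ht
  exact ⟨i, List.eq_of_mem_replicate hat⟩

variable {B : Fin l → A} {c : Fin l → Fin l → ℚ}

lemma cenH_B (hB : ∀ i j, brk (B i) (B j) = c i j • (1 : A)) {L : List A}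
    (hmem : ∀ a ∈ L, ∃ k, a = B k) : CenH L := by
  intro p hp q hq w
  obtain ⟨kp, rfl⟩ := hmem p hp
  obtain ⟨kq, rfl⟩ := hmem q hq
  rw [hB, smul_mul_assoc, one_mul, mul_smul_comm, mul_one]

lemma symmQ_def (P : MvPolynomial (Fin l) ℚ) :
    symmQ B P = (AddMonoidAlgebra.coeff P).sum fun s q => q • symP (mlist B s) := rfl

lemma symmQ_monomial (s : Fin l →₀ ℕ) (q : ℚ) :
    symmQ B (monomial s q) = q • symP (mlist B s) := by
  rw [symmQ_def]
  exact sum_monomial_eq (by rw [zero_smul])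

lemma symmQ_add (P Q : MvPolynomial (Fin l) ℚ) :
    symmQ B (P + Q) = symmQ B P + symmQ B Q := by
  rw [symmQ_def, symmQ_def, symmQ_def]
  exact Finsupp.sum_add_index (fun s _ => by rw [zero_smul])
    (fun s _ q₁ q₂ => by rw [add_smul])

lemma symmQ_zero : symmQ B 0 = 0 := by
  rw [symmQ_def]
  exact Finsupp.sum_zero_index

lemma symmQ_smul (q : ℚ) (P : MvPolynomial (Fin l) ℚ) :
    symmQ B (q • P) = q • symmQ B P := by
  rw [symmQ_def, symmQ_def, Finsupp.smul_sum]
  exact Finsupp.sum_smul_index (fun s => by rw [zero_smul]) |>.trans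
    (Finsupp.sum_congr (fun s _ => by rw [mul_smul]))

lemma symmQ_finsum {ι : Type*} (s : Finset ι) (g : ι → MvPolynomial (Fin l) ℚ) :
    symmQ B (∑ k ∈ s, g k) = ∑ k ∈ s, symmQ B (g k) := by
  classical
  induction s using Finset.induction_on with
  | empty => simp [symmQ_zero]
  | insert a t hx ih =>
                    rw [Finset.sum_insert hx, Finset.sum_insert hx, symmQ_add, ih]

lemma symmQ_C (q : ℚ) : symmQ B (C q) = q • (1 : A) := by
  rw [show (C q : MvPolynomial (Fin l) ℚ) = monomial 0 q from rfl, symmQ_monomial,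
    mlist_zero, symP_nil]

/-- multiplication by a variable corresponds to `dia` with `B i`. -/
lemma symmQ_mul_X (hB : ∀ i j, brk (B i) (B j) = c i j • (1 : A))
    (i : Fin l) (P : MvPolynomial (Fin l) ℚ) :
    symmQ B (P * X i) = dia (B i) (symmQ B P) := by
  induction P using MvPolynomial.induction_on' with
  | monomial s q =>
    rw [show (X i : MvPolynomial (Fin l) ℚ) = monomial (Finsupp.single i 1) 1 from rfl,
      monomial_mul, mul_one, symmQ_monomial, symmQ_monomial,
      symP_perm (mlist_perm_cons B s i)]
    have hcen : CenH (B i :: mlist B s) := by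
      apply cenH_B hB
      intro a ha
      rcases List.mem_cons.mp ha with rfl | ha
      · exact ⟨i, rfl⟩
      · exact mem_mlist ha
    rw [(mainPQ (mlist B s).length (B i) (mlist B s) le_rfl hcen).1, dia_smul_right]
  | add p q hp hq =>
    rw [add_mul, symmQ_add, symmQ_add, hp, hq, dia_add_right]

lemma symmQ_X (hB : ∀ i j, brk (B i) (B j) = c i j • (1 : A)) (j : Fin l) :
    symmQ B (X j) = B j := by
  rw [show (X j : MvPolynomial (Fin l) ℚ) = (1 : MvPolynomial (Fin l) ℚ) * X j by rw [one_mul],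
    symmQ_mul_X hB, show (1 : MvPolynomial (Fin l) ℚ) = C 1 from rfl, symmQ_C,
    one_smul, dia_one_right]

end Lift
section Deriv
open MvPolynomial
variable {A : Type*} [Ring A] [Algebra ℚ A] {l : ℕ} {B : Fin l → A} {c : Fin l → Fin l → ℚ}

lemma brk_zero_left (x : A) : brk 0 x = 0 := by unfold brk; simp

lemma brk_one_left (x : A) : brk 1 x = 0 := by unfold brk; simp

lemma dia_smul_left (q : ℚ) (u v : A) : dia (q • u) v = q • dia u v := by
  rw [dia_comm, dia_smul_right, dia_comm]

lemma dia_one_left (v : A) : dia 1 v = v := by rw [dia_comm, dia_one_right]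

/-- The scalar-coefficient derivation `D_j = Σ_k c_{jk} ∂_k`. -/
noncomputable def Dp (c : Fin l → Fin l → ℚ) (j : Fin l) (P : MvPolynomial (Fin l) ℚ) :
    MvPolynomial (Fin l) ℚ := ∑ k : Fin l, C (c j k) * pderiv k P

lemma Dp_C (j : Fin l) (q : ℚ) : Dp c j (C q) = 0 := by simp [Dp]

lemma Dp_add (j : Fin l) (p q : MvPolynomial (Fin l) ℚ) :
    Dp c j (p + q) = Dp c j p + Dp c j q := by
  simp [Dp, map_add, mul_add, Finset.sum_add_distrib]

lemma Dp_mul_X (j i : Fin l) (p : MvPolynomial (Fin l) ℚ) :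
    Dp c j (p * X i) = C (c j i) * p + Dp c j p * X i := by
  unfold Dp
  simp only [pderiv_mul, pderiv_X, Pi.single_apply, mul_add, Finset.sum_add_distrib]
  rw [add_comm]
  congr 1
  · simp only [mul_ite, ite_mul, mul_one, mul_zero, zero_mul]
    rw [show ∀ G : Fin l → MvPolynomial (Fin l) ℚ,
        (∑ k : Fin l, if i = k then G k else 0) = G i from
      fun G => by rw [Finset.sum_ite_eq]; simp]
  · rw [Finset.sum_mul]
    apply Finset.sum_congr rfl
    intro k _
    ring

lemma brk_symmQ (hB : ∀ i j, brk (B i) (B j) = c i j • (1 : A))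
    (j : Fin l) (P : MvPolynomial (Fin l) ℚ) :
    brk (B j) (symmQ B P) = symmQ B (Dp c j P) := by
  induction P using MvPolynomial.induction_on with
  | C q => rw [symmQ_C, brk_smul_right, brk_one_right, smul_zero, Dp_C, symmQ_zero]
  | add p q hp hq => rw [symmQ_add, brk_add_right, hp, hq, Dp_add, symmQ_add]
  | mul_X p i hp =>
    rw [symmQ_mul_X hB, brk_dia_right, hp, hB j i, dia_smul_left, dia_one_left,
      ← symmQ_mul_X hB i (Dp c j p), ← symmQ_smul, Dp_mul_X, symmQ_add, C_mul']

lemma poisC_zero_left (f : MvPolynomial (Fin l) ℚ) : poisC c 0 f = 0 := by simp [poisC]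

lemma poisC_add_left (g₁ g₂ f : MvPolynomial (Fin l) ℚ) :
    poisC c (g₁ + g₂) f = poisC c g₁ f + poisC c g₂ f := by
  simp [poisC, map_add, add_mul, mul_add, Finset.sum_add_distrib]

lemma poisC_C_left (q : ℚ) (f : MvPolynomial (Fin l) ℚ) : poisC c (C q) f = 0 := by
  simp [poisC]

lemma sum_sum_ite_collapse (r : Fin l) (G : Fin l → Fin l → MvPolynomial (Fin l) ℚ) :
    (∑ p : Fin l, ∑ k : Fin l, if r = p then G p k else 0) = ∑ k : Fin l, G r k := by
  rw [Finset.sum_comm]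
  apply Finset.sum_congr rfl
  intro k _
  rw [Finset.sum_ite_eq]
  simp

lemma poisC_CX_left (q : ℚ) (j : Fin l) (f : MvPolynomial (Fin l) ℚ) :
    poisC c (C q * X j) f = C q * Dp c j f := by
  unfold poisC
  simp only [pderiv_mul, pderiv_C, pderiv_X, zero_mul, zero_add, Pi.single_apply,
    mul_ite, ite_mul, mul_zero, mul_one, zero_mul]
  rw [sum_sum_ite_collapse j (fun p k => C (c p k) * C q * pderiv k f)]
  rw [Dp, Finset.mul_sum]
  apply Finset.sum_congr rfl
  intro k _
  ring

lemma poisC_CXX_left (q : ℚ) (i j : Fin l) (f : MvPolynomial (Fin l) ℚ) :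
    poisC c (C q * (X i * X j)) f = C q * (Dp c i f * X j + Dp c j f * X i) := by
  unfold poisC
  simp only [pderiv_mul, pderiv_C, pderiv_X, zero_mul, zero_add, Pi.single_apply,
    mul_ite, ite_mul, mul_zero, mul_one, one_mul, zero_mul, mul_add, add_mul,
    Finset.sum_add_distrib, add_zero, zero_add]
  rw [sum_sum_ite_collapse i (fun p k => C (c p k) * (C q * X j) * pderiv k f),
    sum_sum_ite_collapse j (fun p k => C (c p k) * (C q * X i) * pderiv k f)]
  rw [Dp, Dp, Finset.sum_mul, Finset.sum_mul, Finset.mul_sum, Finset.mul_sum]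
  congr 1 <;> (apply Finset.sum_congr rfl; intro k _; ring)

lemma good_C (q : ℚ) (f : MvPolynomial (Fin l) ℚ) :
    brk (symmQ B (C q)) (symmQ B f) = symmQ B (poisC c (C q) f) := by
  rw [symmQ_C, brk_smul_left, brk_one_left, smul_zero, poisC_C_left, symmQ_zero]

lemma good_zero (f : MvPolynomial (Fin l) ℚ) :
    brk (symmQ B 0) (symmQ B f) = symmQ B (poisC c 0 f) := by
  rw [symmQ_zero, brk_zero_left, poisC_zero_left, symmQ_zero]

lemma good_add {f g₁ g₂ : MvPolynomial (Fin l) ℚ}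
    (h₁ : brk (symmQ B g₁) (symmQ B f) = symmQ B (poisC c g₁ f))
    (h₂ : brk (symmQ B g₂) (symmQ B f) = symmQ B (poisC c g₂ f)) :
    brk (symmQ B (g₁ + g₂)) (symmQ B f) = symmQ B (poisC c (g₁ + g₂) f) := by
  rw [symmQ_add, brk_add_left, h₁, h₂, poisC_add_left, symmQ_add]

lemma good_CX (hB : ∀ i j, brk (B i) (B j) = c i j • (1 : A))
    (q : ℚ) (j : Fin l) (f : MvPolynomial (Fin l) ℚ) :
    brk (symmQ B (C q * X j)) (symmQ B f) = symmQ B (poisC c (C q * X j) f) := by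
  have eR : symmQ B (C q * Dp c j f) = q • symmQ B (Dp c j f) := by
    rw [C_mul', symmQ_smul]
  have eL : symmQ B (C q * X j) = q • B j := by rw [C_mul', symmQ_smul, symmQ_X hB]
  rw [poisC_CX_left, eL, eR, brk_smul_left, brk_symmQ hB]

lemma good_CXX (hB : ∀ i j, brk (B i) (B j) = c i j • (1 : A))
    (q : ℚ) (i j : Fin l) (f : MvPolynomial (Fin l) ℚ) :
    brk (symmQ B (C q * (X i * X j))) (symmQ B f) = symmQ B (poisC c (C q * (X i * X j)) f) := by
  have e1 : symmQ B (C q * (X i * X j)) = q • dia (B j) (B i) := by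
    rw [C_mul', symmQ_smul, symmQ_mul_X hB, symmQ_X hB]
  rw [e1, brk_smul_left, brk_dia_left, brk_symmQ hB, brk_symmQ hB,
    ← symmQ_mul_X hB j (Dp c i f), ← symmQ_mul_X hB i (Dp c j f), ← symmQ_add,
    ← symmQ_smul, ← C_mul', poisC_CXX_left]

end Deriv
open MvPolynomial in
theorem stmt19 {A : Type*} [Ring A] [Algebra ℚ A] {l m : ℕ}
    (B : Fin l → A) (c : Fin l → Fin l → ℚ)
    (hanti : ∀ i j, c i j = - c j i)
    (hB : ∀ i j, brk (B i) (B j) = c i j • (1 : A))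
    (a : Fin l → Fin l → ℚ) (b : Fin l → ℚ) (c₀ : ℚ) (js : Fin m → Fin l)
    (h f : MvPolynomial (Fin l) ℚ)
    (hh : h = (∑ i : Fin l, ∑ j : Fin l, if i ≤ j then C (a i j) * (X i * X j) else 0)
        + (∑ j : Fin l, C (b j) * X j) + C c₀)
    (hf : f = ∏ r : Fin m, X (js r)) :
    brk (symmQ B h) (symmQ B f) = symmQ B (poisC c h f) := by
  subst hh
  have good_sum : ∀ {ι : Type} (s : Finset ι) (g : ι → MvPolynomial (Fin l) ℚ),
      (∀ k ∈ s, brk (symmQ B (g k)) (symmQ B f) = symmQ B (poisC c (g k) f)) →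
      brk (symmQ B (∑ k ∈ s, g k)) (symmQ B f) = symmQ B (poisC c (∑ k ∈ s, g k) f) := by
    intro ι s g hg
    exact Finset.sum_induction g
      (fun g' => brk (symmQ B g') (symmQ B f) = symmQ B (poisC c g' f))
      (fun _ _ h₁ h₂ => good_add h₁ h₂) (good_zero f) hg
  refine good_add (good_add ?_ ?_) (good_C c₀ f)
  · apply good_sum
    intro i _
    apply good_sum
    intro j _
    by_cases hij : i ≤ j
    · simp only [if_pos hij]
      exact good_CXX hB (a i j) i j f
    · simp only [if_neg hij]
      exact good_zero f
  · apply good_sum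
    intro j _
    exact good_CX hB (b j) j f
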